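/- Under the setup of the basic Lasso inequality, if additionally ‖X^⊤Δ‖₂² ≥ C·t·‖Δ‖₂² for some C > 0 (restricted eigenvalue condition on the cone C(S;3)) and λ = 2σR√(2t·log(2d/δ)), then ‖Δ‖₂ ≤ (3σR/C)·√(2k·log(2d/δ)/t). -/

import Mathlib

/-- Lasso recovery rate. Under the basic Lasso inequality
‖X^⊤Δ‖₂² ≤ (λ/2)‖Δ‖₁ + λ(‖Δ_S‖₁ − ‖Δ_{S^c}‖₁) with |S| = k, if additionally
the restricted eigenvalue condition ‖X^⊤Δ‖₂² ≥ C·t·‖Δ‖₂² holds with C > 0 and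
λ = 2σR√(2t·log(2d/δ)), then ‖Δ‖₂ ≤ (3σR/C)·√(2k·log(2d/δ)/t). -/
private lemma aux9 (x s c u : ℝ) (hc : c ≠ 0) (hu : u ≠ 0) :
    x * (s * u) / (c * u) = x / c * s := by
  field_simp

theorem stmt9 {d t : ℕ} (X : Matrix (Fin d) (Fin t) ℝ) (Δ : Fin d → ℝ)
    (S : Finset (Fin d)) (k : ℕ) (lam C σ R δ : ℝ)
    (ht : 0 < t) (hk : S.card = k) (hC : 0 < C) (hσ : 0 < σ) (hR : 0 < R)
    (hδ0 : 0 < δ) (hδ1 : δ < 1)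
    (hlam : lam = 2 * σ * R * Real.sqrt (2 * t * Real.log (2 * d / δ)))
    (hbasic : (∑ j, (∑ i, X i j * Δ i) ^ 2) ≤
        lam / 2 * (∑ i, |Δ i|) +
        lam * ((∑ i ∈ S, |Δ i|) - ∑ i ∈ Sᶜ, |Δ i|))
    (hRE : C * t * (∑ i, (Δ i) ^ 2) ≤ ∑ j, (∑ i, X i j * Δ i) ^ 2) :
    Real.sqrt (∑ i, (Δ i) ^ 2) ≤
      3 * σ * R / C * Real.sqrt (2 * k * Real.log (2 * d / δ) / t) := by
  set L := Real.log (2 * d / δ) with hLdef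
  set L2 : ℝ := ∑ i, (Δ i) ^ 2 with hL2
  have hL2nn : 0 ≤ L2 := Finset.sum_nonneg fun i _ => sq_nonneg _
  set a := Real.sqrt L2 with ha
  have hann : 0 ≤ a := Real.sqrt_nonneg _
  have hrhsnn : 0 ≤ 3 * σ * R / C * Real.sqrt (2 * k * L / t) := by positivity
  rcases Nat.eq_zero_or_pos d with hd | hd
  · subst hd
    have : L2 = 0 := by simp [hL2]
    rw [ha, this, Real.sqrt_zero]; exact hrhsnn
  -- d ≥ 1
  have hL : 0 < L := by
    rw [hLdef]
    apply Real.log_pos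
    rw [lt_div_iff₀ hδ0]
    have : (1:ℝ) ≤ d := by exact_mod_cast hd
    nlinarith
  have hlampos : 0 < lam := by rw [hlam]; positivity
  -- Cauchy–Schwarz on S
  have hcs0 : (∑ i ∈ S, |Δ i|) ^ 2 ≤ (k : ℝ) * L2 := by
    calc (∑ i ∈ S, |Δ i|) ^ 2 ≤ S.card * ∑ i ∈ S, |Δ i| ^ 2 :=
          sq_sum_le_card_mul_sum_sq
      _ = (k : ℝ) * ∑ i ∈ S, (Δ i) ^ 2 := by rw [hk]; simp [sq_abs]
      _ ≤ (k : ℝ) * L2 := by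
          apply mul_le_mul_of_nonneg_left _ (Nat.cast_nonneg k)
          exact Finset.sum_le_sum_of_subset_of_nonneg (Finset.subset_univ S)
            (fun i _ _ => sq_nonneg _)
  have hSnn : 0 ≤ ∑ i ∈ S, |Δ i| := Finset.sum_nonneg fun i _ => abs_nonneg _
  have hcs : (∑ i ∈ S, |Δ i|) ≤ Real.sqrt k * a := by
    rw [ha, ← Real.sqrt_mul (Nat.cast_nonneg k)]
    exact (Real.le_sqrt hSnn (by positivity)).mpr hcs0
  -- cone: total ℓ1 split
  have hsplit : (∑ i, |Δ i|) = (∑ i ∈ S, |Δ i|) + ∑ i ∈ Sᶜ, |Δ i| :=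
    (Finset.sum_add_sum_compl S _).symm
  have hScnn : 0 ≤ ∑ i ∈ Sᶜ, |Δ i| := Finset.sum_nonneg fun i _ => abs_nonneg _
  have hkey : C * t * L2 ≤ 3 * lam / 2 * (Real.sqrt k * a) := by
    have h1 : C * t * L2 ≤ 3 * lam / 2 * (∑ i ∈ S, |Δ i|) := by
      have := hRE.trans hbasic
      rw [hsplit] at this
      nlinarith
    exact h1.trans (by nlinarith)
  have hsq : a ^ 2 = L2 := Real.sq_sqrt hL2nn
  rcases eq_or_lt_of_le hann with h0 | hapos
  · rw [← h0]; exact hrhsnn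
  -- divide by a
  have htpos' : (0:ℝ) < t := by exact_mod_cast ht
  have hstep : a ≤ 3 * lam / 2 * Real.sqrt k / (C * t) := by
    rw [le_div_iff₀ (by positivity)]
    rw [← hsq] at hkey
    have h2 : C * t * a * a ≤ (3 * lam / 2 * Real.sqrt k) * a := by
      calc C * t * a * a = C * t * a ^ 2 := by ring
        _ ≤ 3 * lam / 2 * (Real.sqrt k * a) := hkey
        _ = (3 * lam / 2 * Real.sqrt k) * a := by ring
    have := le_of_mul_le_mul_right h2 hapos
    linarith
  -- identity for the RHS
  have htpos : (0:ℝ) < t := by exact_mod_cast ht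
  have h1 : Real.sqrt (2 * t * L) * Real.sqrt k = Real.sqrt (2 * k * L / t) * t := by
    rw [← Real.sqrt_mul (by positivity),
      show (t:ℝ) = Real.sqrt ((t:ℝ)^2) from (Real.sqrt_sq (by positivity)).symm,
      ← Real.sqrt_mul (by positivity)]
    congr 1
    field_simp
    rw [Real.sq_sqrt (by positivity)]
  have heq : 3 * lam / 2 * Real.sqrt k / (C * t) =
      3 * σ * R / C * Real.sqrt (2 * k * L / t) := by
    calc 3 * lam / 2 * Real.sqrt k / (C * t)
        = 3 * σ * R * (Real.sqrt (2 * t * L) * Real.sqrt k) / (C * t) := by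
          rw [hlam]; ring
      _ = 3 * σ * R * (Real.sqrt (2 * k * L / t) * t) / (C * t) := by rw [h1]
      _ = 3 * σ * R / C * Real.sqrt (2 * k * L / t) := by
          rw [aux9 _ _ _ _ hC.ne' htpos.ne']
  rw [heq] at hstep
  exact hstep
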